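/- ∑_{p ≤ x, p prime} (ln p)/p = ln x + O(1); that is, there is a constant C such that |∑_{p≤x} (ln p)/p − ln x| ≤ C for all x ≥ 2. -/

import Mathlib

open Finset

private def Pset (N : ℕ) : Finset ℕ := (Finset.Icc 1 N).filter Nat.Prime

private lemma Pset_eq (N : ℕ) : (Finset.range (N+1)).filter Nat.Prime = Pset N := by
  ext p
  simp only [Pset, mem_filter, mem_range, mem_Icc, Nat.lt_succ_iff]
  constructor
  · rintro ⟨h1, h2⟩; exact ⟨⟨h2.one_lt.le.trans' (by norm_num), h1⟩, h2⟩
  · rintro ⟨⟨_, h1⟩, h2⟩; exact ⟨h1, h2⟩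

private lemma log_factorial_eq (N : ℕ) :
    Real.log (N.factorial) = ∑ p ∈ Pset N, (padicValNat p (N.factorial) : ℝ) * Real.log p := by
  have h1 : (N.factorial) = ∏ p ∈ Pset N, p ^ padicValNat p (N.factorial) := by
    conv_lhs => rw [← Nat.prod_pow_prime_padicValNat (N.factorial) N.factorial_ne_zero (N.factorial + 1)
      (Nat.lt_succ_self _)]
    rw [Pset_eq] at *
    symm
    apply Finset.prod_subset
    · intro p hp
      simp only [Pset, mem_filter, mem_Icc] at hp ⊢
      exact ⟨⟨hp.1.1, hp.1.2.trans N.self_le_factorial⟩, hp.2⟩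
    · intro p hp hnp
      simp only [Pset, mem_filter, mem_range, mem_Icc] at hp hnp
      have hpN : ¬ p ≤ N := fun h => hnp ⟨⟨hp.2.one_lt.le.trans' (by norm_num), h⟩, hp.2⟩
      rw [padicValNat.eq_zero_of_not_dvd, pow_zero]
      rw [Nat.Prime.dvd_factorial hp.2]
      exact hpN
  conv_lhs => rw [h1]
  push_cast
  rw [Real.log_prod]
  · exact Finset.sum_congr rfl fun p hp => by rw [Real.log_pow]
  · intro p hp
    have hp' : p.Prime := (mem_filter.mp hp).2
    exact pow_ne_zero _ (Nat.cast_ne_zero.mpr hp'.ne_zero)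

private lemma nu_lower {p N : ℕ} (hp : p.Prime) (hpN : p ≤ N) :
    N / p ≤ padicValNat p N.factorial := by
  haveI : Fact p.Prime := ⟨hp⟩
  rw [padicValNat_factorial (b := Nat.log p N + 1 + 1)
    (Nat.lt_succ_of_lt (Nat.lt_succ_self (Nat.log p N)))]
  have h1 : (1 : ℕ) ∈ Finset.Ico 1 (Nat.log p N + 1 + 1) := by simp
  calc N / p = N / p ^ 1 := by rw [pow_one]
  _ ≤ _ := Finset.single_le_sum (f := fun i => N / p ^ i) (fun i _ => Nat.zero_le _) h1

private lemma nu_upper {p N : ℕ} (hp : p.Prime) :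
    (p - 1) * padicValNat p N.factorial ≤ N := by
  haveI : Fact p.Prime := ⟨hp⟩
  rw [sub_one_mul_padicValNat_factorial]
  exact Nat.sub_le _ _

private lemma theta_le (N : ℕ) : ∑ p ∈ Pset N, Real.log p ≤ N * Real.log 4 := by
  have h1 : ((primorial N : ℕ) : ℝ) = ∏ p ∈ Pset N, (p : ℝ) := by
    rw [primorial, Pset_eq]; push_cast; rfl
  have h2 : ∑ p ∈ Pset N, Real.log p = Real.log (primorial N) := by
    rw [h1, Real.log_prod]
    intro p hp
    exact Nat.cast_ne_zero.mpr ((mem_filter.mp hp).2.ne_zero)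
  rw [h2]
  calc Real.log (primorial N) ≤ Real.log ((4:ℝ) ^ N) := by
        apply Real.log_le_log (by exact_mod_cast primorial_pos N)
        exact_mod_cast primorial_le_4_pow N
  _ = N * Real.log 4 := by rw [Real.log_pow]

noncomputable def Kerr : ℝ := 4 * ∑' n : ℕ, 1 / (n : ℝ) ^ ((3:ℝ)/2)

private lemma summable_f : Summable (fun n : ℕ => 1 / (n : ℝ) ^ ((3:ℝ)/2)) :=
  Real.summable_one_div_nat_rpow.mpr (by norm_num)

private lemma Kerr_nonneg : 0 ≤ Kerr := by
  unfold Kerr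
  have h : (0:ℝ) ≤ ∑' n : ℕ, 1 / (n : ℝ) ^ ((3:ℝ)/2) :=
    tsum_nonneg (fun n => by positivity)
  linarith

private lemma err_term_le {p : ℕ} (hp : p.Prime) :
    Real.log p / ((p : ℝ) * ((p : ℝ) - 1)) ≤ 4 * (1 / (p : ℝ) ^ ((3:ℝ)/2)) := by
  have hp2 : (2 : ℝ) ≤ (p : ℝ) := by exact_mod_cast hp.two_le
  have hp0 : (0 : ℝ) < p := by linarith
  have hlog : Real.log p ≤ 2 * Real.sqrt p := by
    have h1 : Real.log p = 2 * Real.log (Real.sqrt p) := by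
      rw [Real.log_sqrt hp0.le]; ring
    have h2 : Real.log (Real.sqrt p) ≤ Real.sqrt p - 1 :=
      Real.log_le_sub_one_of_pos (Real.sqrt_pos.mpr hp0)
    nlinarith [Real.sqrt_nonneg (p : ℝ)]
  have hden : (p : ℝ) ^ 2 / 2 ≤ (p : ℝ) * ((p : ℝ) - 1) := by nlinarith
  have hsq : Real.sqrt p = (p : ℝ) ^ ((1:ℝ)/2) := Real.sqrt_eq_rpow _
  have hkey : Real.sqrt p / (p : ℝ) ^ 2 = 1 / (p : ℝ) ^ ((3:ℝ)/2) := by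
    rw [hsq, ← Real.rpow_natCast (p : ℝ) 2, ← Real.rpow_sub hp0,
      show (1:ℝ)/2 - (2:ℕ) = -(3/2) by push_cast; norm_num,
      Real.rpow_neg hp0.le, one_div]
  have hden0 : (0 : ℝ) < (p : ℝ) * ((p : ℝ) - 1) := by nlinarith
  calc Real.log p / ((p : ℝ) * ((p : ℝ) - 1))
      ≤ 2 * Real.sqrt p / ((p : ℝ) ^ 2 / 2) :=
        div_le_div₀ (by positivity) hlog (by positivity) hden
    _ = 4 * (Real.sqrt p / (p : ℝ) ^ 2) := by ring
    _ = 4 * (1 / (p : ℝ) ^ ((3:ℝ)/2)) := by rw [hkey]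

private lemma err_sum_le (N : ℕ) :
    ∑ p ∈ Pset N, Real.log p / ((p : ℝ) * ((p : ℝ) - 1)) ≤ Kerr := by
  calc ∑ p ∈ Pset N, Real.log p / ((p : ℝ) * ((p : ℝ) - 1))
      ≤ ∑ p ∈ Pset N, 4 * (1 / (p : ℝ) ^ ((3:ℝ)/2)) :=
        Finset.sum_le_sum fun p hp => err_term_le (Finset.mem_filter.mp hp).2
    _ = 4 * ∑ p ∈ Pset N, 1 / (p : ℝ) ^ ((3:ℝ)/2) := by rw [Finset.mul_sum]
    _ ≤ Kerr := by
        unfold Kerr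
        have h := Summable.sum_le_tsum (Pset N) (fun i _ => by positivity) summable_f
        linarith

private lemma stirling_lower {N : ℕ} (hN : 1 ≤ N) :
    (N : ℝ) * Real.log N - N ≤ Real.log N.factorial := by
  have hf0 : (0 : ℝ) < N.factorial := by exact_mod_cast N.factorial_pos
  have key : (N : ℝ) ^ N ≤ (N.factorial : ℝ) * Real.exp N := by
    have h1 : (N : ℝ) ^ N / (N.factorial : ℝ) ≤ Real.exp N := by
      refine le_trans ?_ (Real.sum_le_exp_of_nonneg (Nat.cast_nonneg N) (N + 1))
      exact Finset.single_le_sum (f := fun i => (N : ℝ) ^ i / (i.factorial : ℝ))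
        (fun i _ => by positivity) (Finset.mem_range.mpr (Nat.lt_succ_self N))
    calc (N : ℝ) ^ N = (N : ℝ) ^ N / (N.factorial : ℝ) * N.factorial := by
          field_simp
    _ ≤ Real.exp N * N.factorial := by
          exact mul_le_mul_of_nonneg_right h1 hf0.le
    _ = (N.factorial : ℝ) * Real.exp N := by ring
  have hN0 : (0 : ℝ) < N := by exact_mod_cast hN
  have := Real.log_le_log (by positivity) key
  rw [Real.log_pow, Real.log_mul hf0.ne' (Real.exp_ne_zero _), Real.log_exp] at this
  linarith

private lemma mertens_nat {N : ℕ} (hN : 2 ≤ N) :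
    |(∑ p ∈ Pset N, Real.log p / p) - Real.log N| ≤ 1 + Kerr + Real.log 4 := by
  have hN0 : (0:ℝ) < N := by positivity
  set S : ℝ := ∑ p ∈ Pset N, Real.log p / p with hS
  set T : ℝ := Real.log N.factorial with hT
  -- facts about each prime in Pset N
  have hmem : ∀ p ∈ Pset N, p.Prime ∧ p ≤ N := fun p hp => by
    have := Finset.mem_filter.mp hp
    exact ⟨this.2, (Finset.mem_Icc.mp this.1).2⟩
  -- upper bound
  have hup : (N:ℝ) * S ≤ (N:ℝ) * Real.log N + (N:ℝ) * Real.log 4 := by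
    have h1 : (N:ℝ) * S = ∑ p ∈ Pset N, (N:ℝ) / p * Real.log p := by
      rw [hS, Finset.mul_sum]
      exact Finset.sum_congr rfl fun p _ => by ring
    have h2 : ∑ p ∈ Pset N, (N:ℝ) / p * Real.log p ≤
        ∑ p ∈ Pset N, ((padicValNat p N.factorial : ℝ) + 1) * Real.log p := by
      refine Finset.sum_le_sum fun p hp => ?_
      obtain ⟨hpp, hpN⟩ := hmem p hp
      have hp0 : (0:ℝ) < p := by exact_mod_cast hpp.pos
      have hlast : (N:ℝ) / p ≤ (padicValNat p N.factorial : ℝ) + 1 := by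
        have hfl : (N:ℝ) / p < (↑(N / p) : ℝ) + 1 := by
          rw [div_lt_iff₀ hp0]
          have hnat : N < (N / p + 1) * p := by
            rw [mul_comm]; exact Nat.lt_mul_div_succ N hpp.pos
          exact_mod_cast hnat
        have := nu_lower hpp hpN
        have : ((N / p : ℕ) : ℝ) ≤ (padicValNat p N.factorial : ℝ) := by exact_mod_cast this
        linarith
      exact mul_le_mul_of_nonneg_right hlast (Real.log_nonneg (by exact_mod_cast hpp.one_lt.le))
    have h3 : ∑ p ∈ Pset N, ((padicValNat p N.factorial : ℝ) + 1) * Real.log p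
        = T + ∑ p ∈ Pset N, Real.log p := by
      rw [hT, log_factorial_eq N, ← Finset.sum_add_distrib]
      exact Finset.sum_congr rfl fun p _ => by ring
    have h4 : T ≤ (N:ℝ) * Real.log N := by
      have hle : (N.factorial : ℝ) ≤ (N:ℝ) ^ N := by exact_mod_cast N.factorial_le_pow
      have := Real.log_le_log (by exact_mod_cast N.factorial_pos) hle
      rwa [Real.log_pow] at this
    have h5 := theta_le N
    linarith [h1, h2, h3, h4, h5]
  -- lower bound
  have hlow : (N:ℝ) * Real.log N - N ≤ (N:ℝ) * S + (N:ℝ) * Kerr := by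
    have h0 : (N:ℝ) * Real.log N - N ≤ T := stirling_lower (by omega)
    have h1 : T ≤ ∑ p ∈ Pset N, (N:ℝ) / ((p:ℝ) - 1) * Real.log p := by
      rw [hT, log_factorial_eq N]
      refine Finset.sum_le_sum fun p hp => ?_
      obtain ⟨hpp, hpN⟩ := hmem p hp
      have hp2 : (2:ℝ) ≤ (p:ℝ) := by exact_mod_cast hpp.two_le
      have hnu : ((p:ℝ) - 1) * (padicValNat p N.factorial : ℝ) ≤ N := by
        have := nu_upper (N := N) hpp
        have hc : (((p - 1) * padicValNat p N.factorial : ℕ) : ℝ) ≤ (N:ℝ) := by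
          exact_mod_cast this
        rwa [Nat.cast_mul, Nat.cast_sub hpp.one_lt.le, Nat.cast_one] at hc
      have : (padicValNat p N.factorial : ℝ) ≤ (N:ℝ) / ((p:ℝ) - 1) := by
        rw [le_div_iff₀ (by linarith)]
        linarith [hnu]
      exact mul_le_mul_of_nonneg_right this (Real.log_nonneg (by exact_mod_cast hpp.one_lt.le))
    have h2 : ∑ p ∈ Pset N, (N:ℝ) / ((p:ℝ) - 1) * Real.log p
        = (N:ℝ) * S + (N:ℝ) * ∑ p ∈ Pset N, Real.log p / ((p:ℝ) * ((p:ℝ) - 1)) := by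
      rw [hS, Finset.mul_sum, Finset.mul_sum, ← Finset.sum_add_distrib]
      refine Finset.sum_congr rfl fun p hp => ?_
      obtain ⟨hpp, hpN⟩ := hmem p hp
      have hp2 : (2:ℝ) ≤ (p:ℝ) := by exact_mod_cast hpp.two_le
      have hp0 : (p:ℝ) ≠ 0 := by linarith
      have hp1 : (p:ℝ) - 1 ≠ 0 := by linarith
      field_simp
      ring
    have h3 : (N:ℝ) * ∑ p ∈ Pset N, Real.log p / ((p:ℝ) * ((p:ℝ) - 1)) ≤ (N:ℝ) * Kerr :=
      mul_le_mul_of_nonneg_left (err_sum_le N) hN0.le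
    linarith
  have hSu : S ≤ Real.log N + Real.log 4 := by
    have := (mul_le_mul_iff_right₀ hN0).mp (by linarith [hup] :
      (N:ℝ) * S ≤ (N:ℝ) * (Real.log N + Real.log 4))
    exact this
  have hSl : Real.log N - (1 + Kerr) ≤ S := by
    have := (mul_le_mul_iff_right₀ hN0).mp (by linarith [hlow] :
      (N:ℝ) * (Real.log N - (1 + Kerr)) ≤ (N:ℝ) * S)
    exact this
  have hlog4 : (0:ℝ) ≤ Real.log 4 := Real.log_nonneg (by norm_num)
  have hK := Kerr_nonneg
  rw [abs_le]
  constructor <;> linarith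

theorem mertens_first :
    ∃ C : ℝ, ∀ x : ℝ, 2 ≤ x →
      |(∑ p ∈ (Finset.Icc 1 ⌊x⌋₊).filter Nat.Prime, Real.log p / p) - Real.log x| ≤ C := by
  refine ⟨1 + Kerr + Real.log 4 + Real.log 2, fun x hx => ?_⟩
  set N := ⌊x⌋₊ with hNdef
  have hN2 : 2 ≤ N := Nat.le_floor (by exact_mod_cast hx)
  have hN0 : (0:ℝ) < N := by positivity
  have hNx : (N:ℝ) ≤ x := Nat.floor_le (by linarith)
  have hxN : x < N + 1 := Nat.lt_floor_add_one x
  have hlog1 : Real.log N ≤ Real.log x := Real.log_le_log hN0 hNx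
  have hlog2 : Real.log x ≤ Real.log 2 + Real.log N := by
    have h2N : x ≤ 2 * N := by
      have : (N:ℝ) + 1 ≤ 2 * N := by
        have : (2:ℝ) ≤ N := by exact_mod_cast hN2
        linarith
      linarith
    calc Real.log x ≤ Real.log (2 * N) := Real.log_le_log (by linarith) h2N
    _ = Real.log 2 + Real.log N := Real.log_mul (by norm_num) hN0.ne'
  have hmain : |(∑ p ∈ Pset N, Real.log p / p) - Real.log N| ≤ 1 + Kerr + Real.log 4 :=
    mertens_nat hN2
  have heq : (∑ p ∈ (Finset.Icc 1 N).filter Nat.Prime, Real.log p / p)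
      = ∑ p ∈ Pset N, Real.log p / p := rfl
  rw [heq]
  calc |(∑ p ∈ Pset N, Real.log p / p) - Real.log x|
      = |((∑ p ∈ Pset N, Real.log p / p) - Real.log N) + (Real.log N - Real.log x)| := by
        congr 1
        ring
    _ ≤ |(∑ p ∈ Pset N, Real.log p / p) - Real.log N| + |Real.log N - Real.log x| :=
        abs_add_le _ _
    _ ≤ (1 + Kerr + Real.log 4) + Real.log 2 := by
        have habs : |Real.log N - Real.log x| ≤ Real.log 2 := by
          rw [abs_le]
          constructor <;> linarith
        linarith
    _ = 1 + Kerr + Real.log 4 + Real.log 2 := by ring
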